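/- Removal of a vertex: let X^* be a filtered simplicial complex on a finite vertex set V with at least two vertices, v ∈ V, and (X − {v})^* the full subcomplex on V − {v}. Then X^* and (X − {v})^* are δ_X(v)-interleaved, where δ_X(v) = min_{w ≠ v} δ_X(v, w); hence d_I^F(X^*, (X − {v})^*) ≤ δ_X(v). -/
import Mathlib


open Finset Function

noncomputable section
open scoped Classical

variable {V W U : Type} [Fintype V] [Fintype W] [Fintype U]

/-- A size function is monotone on nonempty subsets. -/
def Monot (D : Finset V → ℝ) : Prop :=
  ∀ ⦃α β : Finset V⦄, α.Nonempty → α ⊆ β → D α ≤ D β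

/-- `max 0 (sup over nonempty subsets of the vertex set of g)`. -/
def supSub (g : Finset V → ℝ) : ℝ :=
  ((Finset.univ : Finset V).powerset.filter Finset.Nonempty).fold max 0 g

/-- Degree of a morphism: least `r ≥ 0` with `D_Y (f α) ≤ D_X α + r` for all nonempty `α`. -/
def degF (DX : Finset V → ℝ) (DY : Finset W → ℝ) (f : V → W) : ℝ :=
  supSub fun α => DY (α.image f) - DX α

/-- Codegree: least `r ≥ 0` with `D_Y (f α ∪ g α) ≤ D_X α + r` for all nonempty `α`. -/
def codegF (DX : Finset V → ℝ) (DY : Finset W → ℝ) (f g : V → W) : ℝ :=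
  supSub fun α => DY (α.image f ∪ α.image g) - DX α

/-- `codeg^∞`: minimum over chains `f = F 0, …, F n = g` of the max codegree of
consecutive terms. -/
def codegInfF (DX : Finset V → ℝ) (DY : Finset W → ℝ) (f g : V → W) : ℝ :=
  sInf { c : ℝ | ∃ n : ℕ, 0 < n ∧ ∃ F : ℕ → V → W, F 0 = f ∧ F n = g ∧
    c = (Finset.range n).fold max 0 fun i => codegF DX DY (F i) (F (i + 1)) }

/-- `(f, g)` is an `ε`-interleaving between the filtered complexes given by `DX`, `DY`. -/
def IsInterleaving (DX : Finset V → ℝ) (DY : Finset W → ℝ)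
    (f : V → W) (g : W → V) (ε : ℝ) : Prop :=
  degF DX DY f ≤ ε ∧ degF DY DX g ≤ ε ∧
  codegInfF DX DX (g ∘ f) id ≤ 2 * ε ∧ codegInfF DY DY (f ∘ g) id ≤ 2 * ε

/-- The interleaving distance between filtered simplicial complexes. -/
def dIF (DX : Finset V → ℝ) (DY : Finset W → ℝ) : ℝ :=
  sInf { ε : ℝ | 0 ≤ ε ∧ ∃ f g, IsInterleaving DX DY f g ε }

/-- The vertex quasi-distance `δ_X(v,w)`. -/
def vqd (D : Finset V → ℝ) (v w : V) : ℝ :=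
  supSub fun α => D (insert w α) - D (insert v α)

/-- Distortion of a correspondence `R ⊆ V × W`, viewed as a tripod via the projections. -/
def corDis (DX : Finset V → ℝ) (DY : Finset W → ℝ) (R : Finset (V × W)) : ℝ :=
  (R.powerset.filter Finset.Nonempty).fold max 0 fun α =>
    |DX (α.image Prod.fst) - DY (α.image Prod.snd)|

/-- Gromov–Hausdorff distance (via correspondences). -/
def dGHcor (DX : Finset V → ℝ) (DY : Finset W → ℝ) : ℝ :=
  (1 / 2) * sInf { c : ℝ | ∃ R : Finset (V × W),
    (∀ v : V, ∃ w, (v, w) ∈ R) ∧ (∀ w : W, ∃ v, (v, w) ∈ R) ∧ c = corDis DX DY R }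

/-- Distortion of a tripod `(Z, p, q)`. -/
def trdis (DX : Finset V → ℝ) (DY : Finset W → ℝ) {Z : Type} [Fintype Z]
    (p : Z → V) (q : Z → W) : ℝ :=
  supSub fun α : Finset Z => |DX (α.image p) - DY (α.image q)|

/-- Gromov–Hausdorff distance between filtered simplicial complexes (via tripods). -/
def dGHtri (DX : Finset V → ℝ) (DY : Finset W → ℝ) : ℝ :=
  (1 / 2) * sInf { c : ℝ | ∃ (Z : Type) (_i : Fintype Z) (p : Z → V) (q : Z → W),
    Surjective p ∧ Surjective q ∧ c = trdis DX DY p q }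

/-- Diameter of a finite subset of a metric space. -/
def fdiam {M : Type} [MetricSpace M] (σ : Finset M) : ℝ :=
  (σ ×ˢ σ).fold max 0 fun p => dist p.1 p.2

/-- Metric distortion of a correspondence between metric spaces. -/
def metDis {M N : Type} [MetricSpace M] [MetricSpace N] (R : Finset (M × N)) : ℝ :=
  (R ×ˢ R).fold max 0 fun p => |dist p.1.1 p.2.1 - dist p.1.2 p.2.2|

/-- Gromov–Hausdorff distance between finite metric spaces. -/
def dGHmet (M N : Type) [MetricSpace M] [MetricSpace N] : ℝ :=
  (1 / 2) * sInf { c : ℝ | ∃ R : Finset (M × N),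
    (∀ x : M, ∃ y, (x, y) ∈ R) ∧ (∀ y : N, ∃ x, (x, y) ∈ R) ∧ c = metDis R }

/-- Codensity of a vertex: `δ_X(v) = min_{w ≠ v} δ_X(v, w)`. -/
def vcod (D : Finset V → ℝ) (v : V) : ℝ :=
  sInf { d : ℝ | ∃ w, w ≠ v ∧ d = vqd D v w }

lemma supSub_nonneg (g : Finset V → ℝ) : 0 ≤ supSub g := by
  unfold supSub
  exact (Finset.le_fold_max 0).mpr (Or.inl le_rfl)

lemma supSub_le {g : Finset V → ℝ} {c : ℝ} (hc : 0 ≤ c)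
    (h : ∀ α : Finset V, α.Nonempty → g α ≤ c) : supSub g ≤ c := by
  unfold supSub
  refine (Finset.fold_max_le c).mpr ⟨hc, ?_⟩
  intro α hα
  simp only [Finset.mem_filter] at hα
  exact h α hα.2

lemma le_supSub (g : Finset V → ℝ) {α : Finset V} (hα : α.Nonempty) : g α ≤ supSub g := by
  unfold supSub
  exact (Finset.le_fold_max (g α)).mpr (Or.inr ⟨α, by simp [hα], le_rfl⟩)

lemma le_vqd (D : Finset V → ℝ) (v w : V) {α : Finset V} (hα : α.Nonempty) :
    D (insert w α) - D (insert v α) ≤ vqd D v w := by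
  unfold vqd
  exact le_supSub (fun α => D (insert w α) - D (insert v α)) hα

lemma codegInf_le (DX : Finset V → ℝ) (DY : Finset W → ℝ) (f g : V → W) :
    codegInfF DX DY f g ≤ max (codegF DX DY f g) 0 := by
  apply csInf_le
  · refine ⟨0, ?_⟩
    rintro c ⟨n, hn, F, hF0, hFn, rfl⟩
    exact (Finset.le_fold_max 0).mpr (Or.inl le_rfl)
  · refine ⟨1, one_pos, fun i => if i = 0 then f else g, by simp, by simp, ?_⟩
    simp [Finset.range_one]

/-- removal of a vertex: `X^*` and the full subcomplex `(X - {v})^*` are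
`δ_X(v)`-interleaved, hence `d_I^F(X^*, (X - {v})^*) ≤ δ_X(v)`. -/
theorem stmt_15 (D : Finset V → ℝ) (hD : Monot D) (v : V) (hcard : 1 < Fintype.card V) :
    (∃ (f : V → { w : V // w ≠ v }) (g : { w : V // w ≠ v } → V),
      IsInterleaving D (fun α : Finset { w : V // w ≠ v } => D (α.image Subtype.val))
        f g (vcod D v)) ∧
    dIF D (fun α : Finset { w : V // w ≠ v } => D (α.image Subtype.val)) ≤ vcod D v := by
  obtain ⟨w₀, hw₀⟩ := Fintype.exists_ne_of_one_lt_card hcard v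
  have hSne : ({ d : ℝ | ∃ w, w ≠ v ∧ d = vqd D v w }).Nonempty := ⟨vqd D v w₀, w₀, hw₀, rfl⟩
  have hSfin : ({ d : ℝ | ∃ w, w ≠ v ∧ d = vqd D v w }).Finite := by
    apply (Set.finite_range (vqd D v)).subset
    rintro d ⟨w, -, rfl⟩; exact ⟨w, rfl⟩
  have hmem : vcod D v ∈ { d : ℝ | ∃ w, w ≠ v ∧ d = vqd D v w } := hSne.csInf_mem hSfin
  obtain ⟨w, hwv, hwe⟩ := hmem
  set ε := vcod D v with hε
  have hε0 : 0 ≤ ε := by rw [hwe]; exact supSub_nonneg _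
  set D' : Finset { w : V // w ≠ v } → ℝ :=
    fun α => D (α.image Subtype.val) with hD'
  set f : V → { w : V // w ≠ v } := fun u => if h : u = v then ⟨w, hwv⟩ else ⟨u, h⟩ with hf
  have hfval : ∀ u : V, (f u : V) = if u = v then w else u := by
    intro u; by_cases h : u = v <;> simp [hf, h]
  -- the final step in both positive cases
  have hlast : ∀ α : Finset V, α.Nonempty → v ∈ α → D (insert w α) - D α ≤ ε := by
    intro α hα hv
    have h2 : D (insert w α) - D (insert v α) ≤ vqd D v w := le_vqd D v w hα
    rw [Finset.insert_eq_self.mpr hv] at h2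
    rw [hwe]; exact h2
  -- deg f ≤ ε
  have hdegf : degF D D' f ≤ ε := by
    refine supSub_le hε0 ?_
    intro α hα
    simp only [hD']
    by_cases hv : v ∈ α
    · refine le_trans (sub_le_sub_right (hD ?_ (?_ : _ ⊆ insert w α)) (D α)) (hlast α hα hv)
      · simp only [Finset.image_nonempty]
        exact hα
      · intro x hx
        simp only [Finset.mem_image] at hx
        obtain ⟨y, ⟨u, hu, rfl⟩, rfl⟩ := hx
        rw [hfval u]
        by_cases h : u = v <;> simp [h, Finset.mem_insert, hu]
    · refine le_trans (le_of_eq ?_) hε0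
      rw [sub_eq_zero]
      congr 1
      ext x
      simp only [Finset.mem_image]
      constructor
      · rintro ⟨y, ⟨u, hu, rfl⟩, rfl⟩
        have huv : u ≠ v := fun h => hv (h ▸ hu)
        rw [hfval u, if_neg huv]; exact hu
      · intro hx
        have hxv : x ≠ v := fun h => hv (h ▸ hx)
        exact ⟨f x, ⟨x, hx, rfl⟩, by rw [hfval x, if_neg hxv]⟩
  -- deg g ≤ ε
  have hdegg : degF D' D Subtype.val ≤ ε := by
    refine supSub_le hε0 ?_
    intro α hα
    simp only [hD']
    refine le_trans (le_of_eq ?_) hε0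
    rw [sub_eq_zero]
  -- codeg (g ∘ f) id ≤ 2 ε
  have hcod1 : codegF D D (Subtype.val ∘ f) id ≤ 2 * ε := by
    refine supSub_le (by linarith) ?_
    intro α hα
    by_cases hv : v ∈ α
    · refine le_trans (sub_le_sub_right (hD ?_ (?_ : _ ⊆ insert w α)) (D α)) ?_
      · apply Finset.Nonempty.inl
        simp only [Finset.image_nonempty]
        exact hα
      · intro x hx
        rw [Finset.mem_union] at hx
        rcases hx with hx | hx
        · simp only [Finset.mem_image] at hx
          obtain ⟨u, hu, rfl⟩ := hx
          show (f u : V) ∈ insert w α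
          rw [hfval u]
          by_cases h : u = v <;> simp [h, Finset.mem_insert, hu]
        · simp only [Finset.mem_image, id_eq, exists_eq_right] at hx
          exact Finset.mem_insert_of_mem hx
      · have := hlast α hα hv
        linarith
    · refine le_trans (le_of_eq ?_) (by linarith : (0:ℝ) ≤ 2 * ε)
      rw [sub_eq_zero]
      congr 1
      ext x
      simp only [Finset.mem_union, Finset.mem_image, id_eq, exists_eq_right]
      constructor
      · rintro (⟨u, hu, rfl⟩ | hx)
        · have huv : u ≠ v := fun h => hv (h ▸ hu)
          show (f u : V) ∈ α
          rw [hfval u, if_neg huv]; exact hu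
        · exact hx
      · intro hx
        exact Or.inr hx
  -- f ∘ g = id
  have hfg : f ∘ (Subtype.val : { w : V // w ≠ v } → V) = id := by
    funext u
    apply Subtype.ext
    simp [Function.comp, hfval, u.2]
  have hcod2 : codegF D' D' (f ∘ Subtype.val) id ≤ 2 * ε := by
    refine supSub_le (by linarith) ?_
    intro α hα
    rw [hfg]
    refine le_trans (le_of_eq ?_) (by linarith : (0:ℝ) ≤ 2 * ε)
    rw [sub_eq_zero]
    congr 1
    ext x
    simp
  have hint : IsInterleaving D D' f Subtype.val ε := by
    refine ⟨hdegf, hdegg, ?_, ?_⟩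
    · exact (codegInf_le D D (Subtype.val ∘ f) id).trans (max_le hcod1 (by linarith))
    · exact (codegInf_le D' D' (f ∘ Subtype.val) id).trans (max_le hcod2 (by linarith))
  refine ⟨⟨f, Subtype.val, hint⟩, ?_⟩
  apply csInf_le
  · exact ⟨0, fun c hc => hc.1⟩
  · exact ⟨hε0, f, Subtype.val, hint⟩
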